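/- The family of functions (χ_λ)_{λ a partition of n}, where χ_λ(σ) is the number of fixed points of σ ∈ S_n acting on an S_n-orbit in ℝ^n of type λ, is linearly independent in the space of real-valued functions on S_n: if real numbers (c_λ) satisfy Σ_λ c_λ · χ_λ(σ) = 0 for all σ ∈ S_n, then c_λ = 0 for every partition λ of n. -/

import Mathlib

/-- The action of `S_n` on `ℝ^n` by permuting coordinates: `σ • x = x ∘ σ⁻¹`. -/
def psmul {n : ℕ} (σ : Equiv.Perm (Fin n)) (x : Fin n → ℝ) : Fin n → ℝ := x ∘ ⇑σ⁻¹

/-- The `S_n`-orbit of a point `x ∈ ℝ^n`. -/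
def porbit {n : ℕ} (x : Fin n → ℝ) : Set (Fin n → ℝ) := {y | ∃ σ, psmul σ x = y}

/-- The type of a point `x ∈ ℝ^n`: the multiset of its fiber sizes. -/
noncomputable def ptype {n : ℕ} (x : Fin n → ℝ) : Multiset ℕ :=
  (Finset.image x Finset.univ).val.map fun v => (Finset.univ.filter fun j => x j = v).card

/-- `χ(σ)` for the orbit of `w`: the number of fixed points of `σ` on the `S_n`-orbit of
`w`. -/
noncomputable def chi {n : ℕ} (w : Fin n → ℝ) (σ : Equiv.Perm (Fin n)) : ℕ :=
  Nat.card {y : Fin n → ℝ // y ∈ porbit w ∧ psmul σ y = y}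

namespace Stmt14Aux

variable {n : ℕ} (w : Fin n → ℝ)

/-- The fiber of `w` over value `v`. -/
noncomputable def fib (v : ℝ) : Finset (Fin n) :=
  haveI := Classical.dec
  Finset.univ.filter fun j => w j = v

lemma mem_fib_self (i : Fin n) : i ∈ fib w (w i) := by simp [fib]

lemma w_of_mem_fib {v : ℝ} {j : Fin n} (h : j ∈ fib w v) : w j = v := by
  simpa [fib] using h

/-- A cyclic permutation of each fiber. -/
noncomputable def fibPerm (v : ℝ) : Equiv.Perm {j // j ∈ fib w v} :=
  (fib w v).equivFin.trans ((finRotate _).trans (fib w v).equivFin.symm)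

/-- The underlying function of our chosen permutation: rotate within each fiber. -/
noncomputable def sigmaFun : Fin n → Fin n :=
  fun i => (fibPerm w (w i) ⟨i, mem_fib_self w i⟩).val

lemma w_sigmaFun (i : Fin n) : w (sigmaFun w i) = w i :=
  w_of_mem_fib w (fibPerm w (w i) ⟨i, mem_fib_self w i⟩).2

lemma sigmaFun_coe (v : ℝ) (a : {j // j ∈ fib w v}) :
    sigmaFun w a.val = (fibPerm w v a).val := by
  obtain ⟨j, hj⟩ := a
  have h : w j = v := w_of_mem_fib w hj
  subst h
  rfl

lemma sigmaFun_injective : Function.Injective (sigmaFun w) := by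
  intro i j hij
  have hw : w i = w j := by rw [← w_sigmaFun w i, ← w_sigmaFun w j, hij]
  have hj' : j ∈ fib w (w i) := by rw [hw]; exact mem_fib_self w j
  have h1 : sigmaFun w i = (fibPerm w (w i) ⟨i, mem_fib_self w i⟩).val :=
    sigmaFun_coe w (w i) ⟨i, mem_fib_self w i⟩
  have h2 : sigmaFun w j = (fibPerm w (w i) ⟨j, hj'⟩).val :=
    sigmaFun_coe w (w i) ⟨j, hj'⟩
  rw [h1, h2] at hij
  have := (fibPerm w (w i)).injective (Subtype.ext hij)
  exact congrArg Subtype.val this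

noncomputable def sigmaPerm : Equiv.Perm (Fin n) :=
  Equiv.ofBijective _ (Finite.injective_iff_bijective.mp (sigmaFun_injective w))

lemma sigmaPerm_apply (i : Fin n) : sigmaPerm w i = sigmaFun w i := rfl

open Fin.NatCast in
/-- A function invariant under `finRotate` is constant. -/
lemma rot_const {m : ℕ} (f : Fin m → ℝ) (hf : ∀ b, f (finRotate m b) = f b)
    (a b : Fin m) : f a = f b := by
  cases m with
  | zero => exact absurd a.2 (by omega)
  | succ m' =>
    have key : ∀ (k : ℕ) (a : Fin (m' + 1)), f (a + (k : Fin (m' + 1))) = f a := by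
      intro k
      induction k with
      | zero => intro a; simp
      | succ k ih =>
        intro a
        have : ((k + 1 : ℕ) : Fin (m' + 1)) = (k : Fin (m' + 1)) + 1 := by push_cast; ring
        rw [this, ← add_assoc]
        have := hf (a + (k : Fin (m' + 1)))
        rw [finRotate_succ_apply] at this
        rw [this, ih]
    have := key (b - a).val a
    rw [Fin.cast_val_eq_self] at this
    rw [← this]
    congr 1
    abel

/-- A function invariant under `sigmaFun` is constant on fibers of `w`. -/
lemma const_of_invariant (y : Fin n → ℝ) (hy : ∀ i, y (sigmaFun w i) = y i)
    {i j : Fin n} (hij : w i = w j) : y i = y j := by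
  set e := (fib w (w i)).equivFin with he
  have hz : ∀ b, (fun b => y (e.symm b).val) (finRotate (fib w (w i)).card b) =
      (fun b => y (e.symm b).val) b := by
    intro b
    have h1 : (fibPerm w (w i) (e.symm b)) = e.symm (finRotate _ b) := by
      simp [fibPerm, he]
    have h2 := hy (e.symm b).val
    rw [sigmaFun_coe w (w i) (e.symm b), h1] at h2
    exact h2
  have hi : i ∈ fib w (w i) := mem_fib_self w i
  have hj : j ∈ fib w (w i) := by rw [hij]; exact mem_fib_self w j
  have h0 := rot_const (fun b => y (e.symm b).val) hz (e ⟨i, hi⟩) (e ⟨j, hj⟩)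
  simpa using h0

lemma image_psmul (τ : Equiv.Perm (Fin n)) (x : Fin n → ℝ) :
    Finset.image (psmul τ x) Finset.univ = Finset.image x Finset.univ := by
  ext a
  simp only [psmul, Finset.mem_image, Function.comp_apply, Finset.mem_univ, true_and]
  constructor
  · rintro ⟨j, hj⟩; exact ⟨τ⁻¹ j, hj⟩
  · rintro ⟨i, hi⟩; exact ⟨τ i, by simpa using hi⟩

lemma fiber_card_psmul (τ : Equiv.Perm (Fin n)) (x : Fin n → ℝ) (v : ℝ) :
    (Finset.univ.filter fun j => psmul τ x j = v).card =
    (Finset.univ.filter fun j => x j = v).card := by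
  apply Finset.card_bij' (fun j _ => τ⁻¹ j) (fun i _ => τ i)
  · intro j hj
    simp only [Finset.mem_filter, Finset.mem_univ, true_and] at hj ⊢
    exact hj
  · intro i hi
    simp only [Finset.mem_filter, Finset.mem_univ, true_and, psmul,
      Function.comp_apply] at hi ⊢
    exact Finset.mem_filter.mpr ⟨Finset.mem_univ _, by simpa [psmul] using hi⟩
  · intro j _; simp
  · intro i _; simp

lemma ptype_psmul (τ : Equiv.Perm (Fin n)) (x : Fin n → ℝ) :
    ptype (psmul τ x) = ptype x := by
  unfold ptype
  rw [image_psmul]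
  exact Multiset.map_congr rfl (fun v _ => fiber_card_psmul τ x v)

lemma ptype_card (x : Fin n → ℝ) :
    (ptype x).card = (Finset.image x Finset.univ).card := by
  unfold ptype
  rw [Multiset.card_map]
  rfl

end Stmt14Aux

open Stmt14Aux in
/-- the family `(χ_λ)_{λ a partition of n}` is linearly independent: if reals
`(c_λ)` satisfy `Σ_λ c_λ · χ_λ(σ) = 0` for all `σ ∈ S_n`, then all `c_λ = 0`. Here `x λ` is a
chosen point of type `λ` and `χ_λ = chi (x λ)`. -/
theorem stmt_14 {n : ℕ} (x : Nat.Partition n → (Fin n → ℝ))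
    (hx : ∀ l, ptype (x l) = l.parts) (c : Nat.Partition n → ℝ)
    (h : ∀ σ : Equiv.Perm (Fin n),
      ∑ l : Nat.Partition n, c l * (chi (x l) σ : ℝ) = 0) :
    ∀ l, c l = 0 := by
  by_contra hc
  push_neg at hc
  obtain ⟨lstar, hlstar⟩ := hc
  classical
  set T : Finset (Nat.Partition n) := Finset.univ.filter (fun l => c l ≠ 0) with hT
  have hTne : T.Nonempty := ⟨lstar, by simp [hT, hlstar]⟩
  obtain ⟨l0, hl0T, hmin⟩ := T.exists_min_image (fun l => l.parts.card) hTne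
  have hcl0 : c l0 ≠ 0 := by simpa [hT] using hl0T
  set w := x l0 with hw
  set σ := sigmaPerm w with hσ
  -- fixedness of points under σ gives constancy along fibers of w
  have hfixed_const : ∀ y : Fin n → ℝ, psmul σ y = y →
      ∀ i j, w i = w j → y i = y j := by
    intro y hy i j hij
    apply const_of_invariant w y _ hij
    intro i'
    have := congrFun hy (σ i')
    simp only [psmul, Function.comp_apply, Equiv.Perm.inv_def, Equiv.symm_apply_apply] at this
    rw [← sigmaPerm_apply, ← hσ]
    exact this.symm
  -- key: any fixed point in an orbit of type μ (with μ in T) forces μ = l0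
  have hkey : ∀ μ : Nat.Partition n, μ ∈ T →
      ∀ y : Fin n → ℝ, y ∈ porbit (x μ) → psmul σ y = y → μ = l0 := by
    intro μ hμT y hy1 hy2
    obtain ⟨τ, hτ⟩ := hy1
    have hty : ptype y = μ.parts := by rw [← hτ, ptype_psmul, hx]
    have htw : ptype w = l0.parts := hx l0
    have hconst : ∀ i j, w i = w j → y i = y j := hfixed_const y hy2
    -- build factorization y = g ∘ w
    set g : ℝ → ℝ := fun v => if h : ∃ i, w i = v then y h.choose else 0 with hg
    have hgw : ∀ i, y i = g (w i) := by
      intro i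
      have hex : ∃ i', w i' = w i := ⟨i, rfl⟩
      rw [hg]
      simp only [dif_pos hex]
      exact hconst i hex.choose hex.choose_spec.symm
    have hyeq : y = g ∘ w := funext hgw
    have himg : Finset.image y Finset.univ = (Finset.image w Finset.univ).image g := by
      rw [Finset.image_image, ← hyeq]
    -- card chain
    have hc1 : μ.parts.card = (Finset.image y Finset.univ).card := by
      rw [← hty, ptype_card]
    have hc2 : (Finset.image w Finset.univ).card = l0.parts.card := by
      rw [← htw, ptype_card]
    have hle : (Finset.image y Finset.univ).card ≤ (Finset.image w Finset.univ).card := by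
      rw [himg]; exact Finset.card_image_le
    have hge : l0.parts.card ≤ μ.parts.card := hmin μ hμT
    have hcards : (Finset.image y Finset.univ).card = (Finset.image w Finset.univ).card := by
      omega
    have hinj : Set.InjOn g (Finset.image w Finset.univ) := by
      rw [← Finset.card_image_iff, ← himg, hcards]
    -- fibers of y are fibers of w
    have hfib : ∀ v ∈ Finset.image w Finset.univ,
        (Finset.univ.filter fun j => y j = g v) = (Finset.univ.filter fun j => w j = v) := by
      intro v hv
      ext j
      simp only [Finset.mem_filter, Finset.mem_univ, true_and]
      constructor
      · intro hj
        have hwj : w j ∈ Finset.image w Finset.univ :=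
          Finset.mem_image.mpr ⟨j, Finset.mem_univ j, rfl⟩
        exact hinj hwj hv (by rw [← hgw j]; exact hj)
      · intro hj; rw [hgw j, hj]
    -- ptype y = ptype w
    have hpty : ptype y = ptype w := by
      unfold ptype
      rw [himg, Finset.image_val_of_injOn hinj, Multiset.map_map]
      apply Multiset.map_congr rfl
      intro v hv
      have hv' : v ∈ Finset.image w Finset.univ := hv
      simp only [Function.comp_apply]
      rw [hfib v hv']
    have : μ.parts = l0.parts := by rw [← hty, hpty, htw]
    exact Nat.Partition.ext this
  -- χ_{l0}(σ) > 0
  haveI hfin : ∀ μ : Nat.Partition n,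
      Finite {y : Fin n → ℝ // y ∈ porbit (x μ) ∧ psmul σ y = y} := by
    intro μ
    have h1 : {y : Fin n → ℝ | y ∈ porbit (x μ) ∧ psmul σ y = y} ⊆
        Set.range (fun τ => psmul τ (x μ)) := fun y hy => hy.1
    exact ((Set.finite_range _).subset h1).to_subtype
  have hwfix : psmul σ w = w := by
    funext j
    simp only [psmul, Function.comp_apply]
    have := w_sigmaFun w (σ⁻¹ j)
    rw [← sigmaPerm_apply, ← hσ] at this
    simpa using this.symm
  have hchi_pos : 0 < chi (x l0) σ := by
    haveI : Nonempty {y : Fin n → ℝ // y ∈ porbit (x l0) ∧ psmul σ y = y} :=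
      ⟨⟨w, ⟨1, by funext j; simp [psmul]; rfl⟩, hwfix⟩⟩
    haveI := hfin l0
    exact Nat.card_pos
  -- other χ's vanish on T \ {l0}
  have hchi_zero : ∀ μ : Nat.Partition n, μ ≠ l0 → c μ ≠ 0 → chi (x μ) σ = 0 := by
    intro μ hμ hcμ
    have hμT : μ ∈ T := by simp [hT, hcμ]
    haveI : IsEmpty {y : Fin n → ℝ // y ∈ porbit (x μ) ∧ psmul σ y = y} := by
      constructor
      rintro ⟨y, hy1, hy2⟩
      exact hμ (hkey μ hμT y hy1 hy2)
    exact Nat.card_of_isEmpty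
  -- conclude
  have hsum := h σ
  rw [Finset.sum_eq_single l0] at hsum
  · have hne : (chi (x l0) σ : ℝ) ≠ 0 := by exact_mod_cast hchi_pos.ne'
    rcases mul_eq_zero.mp hsum with h' | h'
    · exact hcl0 h'
    · exact hne h'
  · intro b _ hb
    by_cases hcb : c b = 0
    · rw [hcb, zero_mul]
    · rw [hchi_zero b hb hcb]; simp
  · intro h'; exact absurd (Finset.mem_univ l0) h'
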